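/- Let (X, d) be a metric space with a Borel measure μ, and let C₀ > 0 and 0 < n₁ ≤ n₂ be real numbers such that μ(B(x,r)) ≤ C₀ r^{n₁} for all x ∈ X and 0 < r ≤ 1, and μ(B(x,r)) ≤ C₀ r^{n₂} for all x ∈ X and r ≥ 1. Then there exists a constant C > 0, depending only on C₀, n₁, n₂, such that for every t > 0, every r > 0, every measurable p : X × X → ℝ with |p(y,z)| ≤ t^{-n₁/2} exp(-d(y,z)²/(4t)) for all y,z, every pair of open balls B₁, B₂ in X with d(y,z) > r for all y ∈ B₁, z ∈ B₂, and all f, g ∈ L²(μ) with f vanishing μ-a.e. outside B₁ and g vanishing μ-a.e. outside B₂: |∫∫ p(x,y) f(x) g(y) dμ(y) dμ(x)| ≤ C (1+t)^{(n₂-n₁)/2} exp(-r²/(8t)) ‖f‖_{L²} ‖g‖_{L²}. -/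

import Mathlib

open MeasureTheory Real
open scoped ENNReal

-- auxiliary: ofReal of |∫| is at most the lintegral of ofReal of abs
private lemma aux_ofReal_abs_integral {X : Type*} [MeasurableSpace X] (μ : Measure X)
    (h : X → ℝ) : ENNReal.ofReal |∫ x, h x ∂μ| ≤ ∫⁻ x, ENNReal.ofReal |h x| ∂μ := by
  by_cases hi : Integrable h μ
  · calc ENNReal.ofReal |∫ x, h x ∂μ| ≤ ENNReal.ofReal (∫ x, |h x| ∂μ) :=
        ENNReal.ofReal_le_ofReal (by simpa [Real.norm_eq_abs] using norm_integral_le_integral_norm h)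
    _ = ∫⁻ x, ENNReal.ofReal |h x| ∂μ :=
        ofReal_integral_eq_lintegral_ofReal hi.abs (Filter.Eventually.of_forall fun x => abs_nonneg _)
  · rw [integral_undef hi]; simp

private lemma aux_cs {X : Type*} [MeasurableSpace X] (μ : Measure X) {F G : X → ℝ≥0∞}
    (hF : AEMeasurable F μ) (hG : AEMeasurable G μ) :
    ∫⁻ x, F x * G x ∂μ
      ≤ (∫⁻ x, F x ^ (2:ℝ) ∂μ) ^ (1/2:ℝ) * (∫⁻ x, G x ^ (2:ℝ) ∂μ) ^ (1/2:ℝ) := by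
  have h := ENNReal.lintegral_mul_le_Lp_mul_Lq μ
    Real.HolderConjugate.two_two hF hG
  simpa using h

private lemma schur_test {X : Type*} [MeasurableSpace X] (μ : Measure X) [SFinite μ]
    {K : X × X → ℝ≥0∞} (hK : Measurable K)
    {F G : X → ℝ≥0∞} (hF : Measurable F) (hG : Measurable G)
    {S : ℝ≥0∞} (hS : S ≠ ∞)
    (hrow : ∀ x, ∫⁻ y, K (x, y) ∂μ ≤ S) (hcol : ∀ y, ∫⁻ x, K (x, y) ∂μ ≤ S) :
    ∫⁻ x, ∫⁻ y, K (x, y) * F x * G y ∂μ ∂μ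
      ≤ S * (∫⁻ x, F x ^ (2:ℝ) ∂μ) ^ (1/2:ℝ) * (∫⁻ y, G y ^ (2:ℝ) ∂μ) ^ (1/2:ℝ) := by
  have hKx : ∀ x, Measurable fun y => K (x, y) := fun x => hK.comp measurable_prodMk_left
  rcases eq_or_ne S 0 with rfl | hS0
  · have hx : ∀ x, ∫⁻ y, K (x, y) * F x * G y ∂μ = 0 := by
      intro x
      have h0 : ∫⁻ y, K (x, y) ∂μ = 0 := le_antisymm (hrow x) zero_le
      rw [lintegral_eq_zero_iff (hKx x)] at h0
      rw [lintegral_eq_zero_iff (f := fun y => K (x, y) * F x * G y) (((hKx x).mul measurable_const).mul hG)]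
      filter_upwards [h0] with y hy
      simp [hy]
    simp [hx]
  · -- main case
    set H : X → ℝ≥0∞ := fun x => (∫⁻ y, K (x, y) * G y ^ (2:ℝ) ∂μ) ^ (1/2:ℝ) with hHdef
    have hKG2 : Measurable fun z : X × X => K z * G z.2 ^ (2:ℝ) :=
      hK.mul ((hG.comp measurable_snd).pow_const _)
    have hHmeas : Measurable H :=
      (Measurable.lintegral_prod_right' (f := fun z : X × X => K z * G z.2 ^ (2:ℝ)) hKG2).pow_const _
    have sqsq : ∀ a : ℝ≥0∞, (a ^ (1/2:ℝ)) ^ (2:ℝ) = a := by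
      intro a
      rw [← ENNReal.rpow_mul]
      norm_num
    have step1 : ∀ x, ∫⁻ y, K (x, y) * G y ∂μ ≤ S ^ (1/2:ℝ) * H x := by
      intro x
      have e1 : ∀ y, K (x, y) * G y = K (x, y) ^ (1/2:ℝ) * (K (x, y) ^ (1/2:ℝ) * G y) := by
        intro y
        rw [← mul_assoc, ← ENNReal.rpow_add_of_nonneg _ _ (by norm_num) (by norm_num)]
        norm_num
      calc ∫⁻ y, K (x, y) * G y ∂μ
          = ∫⁻ y, K (x, y) ^ (1/2:ℝ) * (K (x, y) ^ (1/2:ℝ) * G y) ∂μ := by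
            exact lintegral_congr fun y => e1 y
        _ ≤ (∫⁻ y, (K (x, y) ^ (1/2:ℝ)) ^ (2:ℝ) ∂μ) ^ (1/2:ℝ)
            * (∫⁻ y, (K (x, y) ^ (1/2:ℝ) * G y) ^ (2:ℝ) ∂μ) ^ (1/2:ℝ) :=
            aux_cs μ ((hKx x).pow_const _).aemeasurable
              (((hKx x).pow_const _).mul hG).aemeasurable
        _ = (∫⁻ y, K (x, y) ∂μ) ^ (1/2:ℝ) * H x := by
            congr 1
            · congr 1; exact lintegral_congr fun y => sqsq _
            · rw [hHdef]; congr 1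
              refine lintegral_congr fun y => ?_
              rw [ENNReal.mul_rpow_of_nonneg _ _ (by norm_num : (0:ℝ) ≤ 2), sqsq]
        _ ≤ S ^ (1/2:ℝ) * H x :=
            mul_le_mul_left (ENNReal.rpow_le_rpow (hrow x) (by norm_num)) _
    have swap : ∫⁻ x, ∫⁻ y, K (x, y) * G y ^ (2:ℝ) ∂μ ∂μ ≤ S * ∫⁻ y, G y ^ (2:ℝ) ∂μ := by
      rw [lintegral_lintegral_swap (f := fun x y => K (x, y) * G y ^ (2:ℝ))
        (by exact hKG2.aemeasurable)]
      calc ∫⁻ y, ∫⁻ x, K (x, y) * G y ^ (2:ℝ) ∂μ ∂μ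
          = ∫⁻ y, (∫⁻ x, K (x, y) ∂μ) * G y ^ (2:ℝ) ∂μ := by
            refine lintegral_congr fun y => ?_
            exact lintegral_mul_const _ (hK.comp measurable_prodMk_right)
        _ ≤ ∫⁻ y, S * G y ^ (2:ℝ) ∂μ :=
            lintegral_mono fun y => mul_le_mul_left (hcol y) _
        _ = S * ∫⁻ y, G y ^ (2:ℝ) ∂μ := lintegral_const_mul _ (hG.pow_const _)
    calc ∫⁻ x, ∫⁻ y, K (x, y) * F x * G y ∂μ ∂μ
        = ∫⁻ x, F x * ∫⁻ y, K (x, y) * G y ∂μ ∂μ := by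
          refine lintegral_congr fun x => ?_
          rw [← lintegral_const_mul _ (f := fun y => K (x, y) * G y) ((hKx x).mul hG)]
          exact lintegral_congr fun y => by ring
      _ ≤ ∫⁻ x, F x * (S ^ (1/2:ℝ) * H x) ∂μ :=
          lintegral_mono fun x => mul_le_mul_right (step1 x) _
      _ = S ^ (1/2:ℝ) * ∫⁻ x, F x * H x ∂μ := by
          rw [← lintegral_const_mul _ (f := fun x => F x * H x) (hF.mul hHmeas)]
          exact lintegral_congr fun x => by ring
      _ ≤ S ^ (1/2:ℝ) * ((∫⁻ x, F x ^ (2:ℝ) ∂μ) ^ (1/2:ℝ) * (∫⁻ x, H x ^ (2:ℝ) ∂μ) ^ (1/2:ℝ)) :=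
          mul_le_mul_right (aux_cs μ hF.aemeasurable hHmeas.aemeasurable) _
      _ ≤ S ^ (1/2:ℝ) * ((∫⁻ x, F x ^ (2:ℝ) ∂μ) ^ (1/2:ℝ)
            * (S * ∫⁻ y, G y ^ (2:ℝ) ∂μ) ^ (1/2:ℝ)) := by
          refine mul_le_mul_right (mul_le_mul_right (ENNReal.rpow_le_rpow ?_ (by norm_num)) _) _
          calc ∫⁻ x, H x ^ (2:ℝ) ∂μ = ∫⁻ x, ∫⁻ y, K (x, y) * G y ^ (2:ℝ) ∂μ ∂μ :=
                lintegral_congr fun x => sqsq _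
            _ ≤ S * ∫⁻ y, G y ^ (2:ℝ) ∂μ := swap
      _ = S * (∫⁻ x, F x ^ (2:ℝ) ∂μ) ^ (1/2:ℝ) * (∫⁻ y, G y ^ (2:ℝ) ∂μ) ^ (1/2:ℝ) := by
          rw [ENNReal.mul_rpow_of_nonneg _ _ (by norm_num : (0:ℝ) ≤ 1/2)]
          have : S ^ (1/2:ℝ) * S ^ (1/2:ℝ) = S := by
            rw [← ENNReal.rpow_add _ _ hS0 hS]; norm_num
          calc S ^ (1/2:ℝ) * ((∫⁻ x, F x ^ (2:ℝ) ∂μ) ^ (1/2:ℝ)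
                * (S ^ (1/2:ℝ) * (∫⁻ y, G y ^ (2:ℝ) ∂μ) ^ (1/2:ℝ)))
              = (S ^ (1/2:ℝ) * S ^ (1/2:ℝ)) * (∫⁻ x, F x ^ (2:ℝ) ∂μ) ^ (1/2:ℝ)
                * (∫⁻ y, G y ^ (2:ℝ) ∂μ) ^ (1/2:ℝ) := by ring
            _ = _ := by rw [this]

private lemma term_ineq {C₀ n₁ n₂ a : ℝ} (hC₀ : 0 < C₀) (hn₁ : 0 < n₁) (hn : n₁ ≤ n₂)
    (ha : 0 < a) (k : ℕ) :
    Real.exp (-(k:ℝ)^2) * (C₀ * ((((k:ℝ)+1)*a)^n₁ * (1+((k:ℝ)+1)*a)^(n₂-n₁)))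
      ≤ (Real.exp (n₂^2/2) * (C₀ * (a^n₁ * (1+a)^(n₂-n₁)))) * Real.exp (-(1/2:ℝ))^k := by
  have hk0 : (0:ℝ) ≤ k := Nat.cast_nonneg k
  have hk1 : (0:ℝ) < (k:ℝ)+1 := by positivity
  have hn₂ : 0 < n₂ := lt_of_lt_of_le hn₁ hn
  have h1 : (((k:ℝ)+1)*a)^n₁ = ((k:ℝ)+1)^n₁ * a^n₁ := Real.mul_rpow hk1.le ha.le
  have h2 : (1+((k:ℝ)+1)*a)^(n₂-n₁) ≤ ((k:ℝ)+1)^(n₂-n₁) * (1+a)^(n₂-n₁) := by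
    rw [← Real.mul_rpow hk1.le (by linarith)]
    apply Real.rpow_le_rpow (by positivity) (by nlinarith) (by linarith)
  have h4 : ((k:ℝ)+1)^n₁ * ((k:ℝ)+1)^(n₂-n₁) = ((k:ℝ)+1)^n₂ := by
    rw [← Real.rpow_add hk1]; ring_nf
  have h5 : ((k:ℝ)+1)^n₂ ≤ Real.exp (n₂ * k) := by
    rw [Real.rpow_def_of_pos hk1]
    apply Real.exp_le_exp.mpr
    have := Real.log_le_sub_one_of_pos hk1
    have hlog : Real.log ((k:ℝ)+1) ≤ (k:ℝ) := by linarith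
    nlinarith [Real.log_nonneg (by linarith : (1:ℝ) ≤ (k:ℝ)+1)]
  have h6 : Real.exp (-(k:ℝ)^2) * Real.exp (n₂ * k)
      ≤ Real.exp (n₂^2/2) * Real.exp (-(1/2:ℝ))^k := by
    rw [← Real.exp_nat_mul, ← Real.exp_add, ← Real.exp_add]
    apply Real.exp_le_exp.mpr
    have hkk : (0:ℝ) ≤ (k:ℝ)*((k:ℝ)-1) := by
      rcases Nat.eq_zero_or_pos k with rfl | hk
      · simp
      · have h1k : (1:ℝ) ≤ (k:ℝ) := by exact_mod_cast hk
        nlinarith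
    nlinarith [sq_nonneg ((k:ℝ) - n₂)]
  have hpos1 : (0:ℝ) ≤ a^n₁ * (1+a)^(n₂-n₁) := by positivity
  have hpos2 : (0:ℝ) ≤ ((k:ℝ)+1)^n₁ := Real.rpow_nonneg hk1.le _
  calc Real.exp (-(k:ℝ)^2) * (C₀ * ((((k:ℝ)+1)*a)^n₁ * (1+((k:ℝ)+1)*a)^(n₂-n₁)))
      ≤ Real.exp (-(k:ℝ)^2) * (C₀ * ((((k:ℝ)+1)^n₁ * a^n₁)
          * (((k:ℝ)+1)^(n₂-n₁) * (1+a)^(n₂-n₁)))) := by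
        rw [h1]
        have hnn : (0:ℝ) ≤ ((k:ℝ)+1)^n₁ * a^n₁ := by positivity
        have := mul_le_mul_of_nonneg_left h2 hnn
        nlinarith [Real.exp_pos (-(k:ℝ)^2), mul_le_mul_of_nonneg_left
          (mul_le_mul_of_nonneg_left h2 hnn) hC₀.le]
    _ = (Real.exp (-(k:ℝ)^2) * ((k:ℝ)+1)^n₂) * (C₀ * (a^n₁ * (1+a)^(n₂-n₁))) := by
        rw [← h4]; ring
    _ ≤ (Real.exp (n₂^2/2) * Real.exp (-(1/2:ℝ))^k) * (C₀ * (a^n₁ * (1+a)^(n₂-n₁))) := by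
        apply mul_le_mul_of_nonneg_right _ (by positivity)
        calc Real.exp (-(k:ℝ)^2) * ((k:ℝ)+1)^n₂
            ≤ Real.exp (-(k:ℝ)^2) * Real.exp (n₂*k) :=
              mul_le_mul_of_nonneg_left h5 (Real.exp_pos _).le
          _ ≤ _ := h6
    _ = _ := by ring

private lemma kernel_int {X : Type*} [MetricSpace X] [MeasurableSpace X] [BorelSpace X]
    (μ : Measure X) {C₀ n₁ n₂ : ℝ} (hC₀ : 0 < C₀) (hn₁ : 0 < n₁) (hn : n₁ ≤ n₂)
    (hvol : ∀ (x : X) (ρ : ℝ), 0 < ρ →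
      μ (Metric.ball x ρ) ≤ ENNReal.ofReal (C₀ * (ρ^n₁ * (1+ρ)^(n₂-n₁))))
    {t : ℝ} (ht : 0 < t) (x : X) :
    ∫⁻ y, ENNReal.ofReal (Real.exp (-(dist x y)^2 / (8*t))) ∂μ
      ≤ ENNReal.ofReal ((Real.exp (n₂^2/2) * (1 - Real.exp (-(1/2:ℝ)))⁻¹)
          * (C₀ * (Real.sqrt (8*t) ^ n₁ * (1 + Real.sqrt (8*t)) ^ (n₂-n₁)))) := by
  set a := Real.sqrt (8*t) with ha_def
  have h8t : (0:ℝ) < 8*t := by linarith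
  have ha : 0 < a := Real.sqrt_pos.mpr h8t
  have ha2 : a^2 = 8*t := Real.sq_sqrt h8t.le
  set A : ℕ → Set X := fun k => Metric.ball x (((k:ℝ)+1)*a) \ Metric.ball x ((k:ℝ)*a) with hA
  have hcover : (⋃ k, A k) = Set.univ := by
    ext y
    simp only [Set.mem_iUnion, Set.mem_univ, iff_true, hA, Set.mem_diff, Metric.mem_ball]
    refine ⟨⌊dist y x / a⌋₊, ?_, ?_⟩
    · have h1 := Nat.lt_floor_add_one (dist y x / a)
      have := (div_lt_iff₀ ha).mp h1
      linarith
    · intro hmem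
      have h2 : (⌊dist y x / a⌋₊ : ℝ) ≤ dist y x / a := Nat.floor_le (by positivity)
      rw [le_div_iff₀ ha] at h2
      linarith
  have hexp_pos : (0:ℝ) < 1 - Real.exp (-(1/2:ℝ)) := by
    have : Real.exp (-(1/2:ℝ)) < 1 := Real.exp_lt_one_iff.mpr (by norm_num)
    linarith
  calc ∫⁻ y, ENNReal.ofReal (Real.exp (-(dist x y)^2 / (8*t))) ∂μ
      = ∫⁻ y in ⋃ k, A k, ENNReal.ofReal (Real.exp (-(dist x y)^2 / (8*t))) ∂μ := by
        rw [hcover, setLIntegral_univ]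
    _ ≤ ∑' k, ∫⁻ y in A k, ENNReal.ofReal (Real.exp (-(dist x y)^2 / (8*t))) ∂μ :=
        lintegral_iUnion_le _ _
    _ ≤ ∑' k : ℕ, ENNReal.ofReal (Real.exp (-(k:ℝ)^2)) * μ (A k) := by
        refine ENNReal.tsum_le_tsum fun k => ?_
        have hb : ∀ y ∈ A k, ENNReal.ofReal (Real.exp (-(dist x y)^2 / (8*t)))
            ≤ ENNReal.ofReal (Real.exp (-(k:ℝ)^2)) := by
          intro y hy
          apply ENNReal.ofReal_le_ofReal
          apply Real.exp_le_exp.mpr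
          have hd : (k:ℝ)*a ≤ dist x y := by
            have h3 : ¬ dist y x < (k:ℝ)*a := by
              simpa [hA, Metric.mem_ball] using hy.2
            rw [dist_comm]
            linarith [not_lt.mp h3]
          have hk0 : (0:ℝ) ≤ (k:ℝ) := Nat.cast_nonneg k
          have hka : (0:ℝ) ≤ (k:ℝ)*a := by positivity
          have hsq : (k:ℝ)^2 * (8*t) ≤ (dist x y)^2 := by
            have := mul_le_mul hd hd hka dist_nonneg
            nlinarith [ha2]
          rw [div_le_iff₀ h8t]
          linarith
        calc ∫⁻ y in A k, ENNReal.ofReal (Real.exp (-(dist x y)^2 / (8*t))) ∂μ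
            ≤ ∫⁻ _ in A k, ENNReal.ofReal (Real.exp (-(k:ℝ)^2)) ∂μ :=
              setLIntegral_mono measurable_const hb
          _ = ENNReal.ofReal (Real.exp (-(k:ℝ)^2)) * μ (A k) := setLIntegral_const _ _
    _ ≤ ∑' k : ℕ, ENNReal.ofReal ((Real.exp (n₂^2/2) * (C₀ * (a^n₁ * (1+a)^(n₂-n₁))))
          * Real.exp (-(1/2:ℝ))^k) := by
        refine ENNReal.tsum_le_tsum fun k => ?_
        have hk1 : (0:ℝ) < (k:ℝ)+1 := by positivity
        have hμ : μ (A k) ≤ ENNReal.ofReal (C₀ * ((((k:ℝ)+1)*a)^n₁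
            * (1+((k:ℝ)+1)*a)^(n₂-n₁))) :=
          le_trans (measure_mono Set.diff_subset) (hvol x _ (by positivity))
        calc ENNReal.ofReal (Real.exp (-(k:ℝ)^2)) * μ (A k)
            ≤ ENNReal.ofReal (Real.exp (-(k:ℝ)^2)) * ENNReal.ofReal (C₀ * ((((k:ℝ)+1)*a)^n₁
              * (1+((k:ℝ)+1)*a)^(n₂-n₁))) := mul_le_mul_right hμ _
          _ = ENNReal.ofReal (Real.exp (-(k:ℝ)^2) * (C₀ * ((((k:ℝ)+1)*a)^n₁
              * (1+((k:ℝ)+1)*a)^(n₂-n₁)))) :=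
              (ENNReal.ofReal_mul (Real.exp_nonneg _)).symm
          _ ≤ _ := ENNReal.ofReal_le_ofReal (term_ineq hC₀ hn₁ hn ha k)
    _ = ENNReal.ofReal (Real.exp (n₂^2/2) * (C₀ * (a^n₁ * (1+a)^(n₂-n₁))))
          * ∑' k : ℕ, ENNReal.ofReal (Real.exp (-(1/2:ℝ)))^k := by
        simp_rw [ENNReal.ofReal_mul (by positivity : (0:ℝ) ≤ Real.exp (n₂^2/2)
          * (C₀ * (a^n₁ * (1+a)^(n₂-n₁)))), ENNReal.ofReal_pow (Real.exp_nonneg _)]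
        rw [ENNReal.tsum_mul_left]
    _ ≤ _ := by
        rw [ENNReal.tsum_geometric]
        have h1 : (1:ℝ≥0∞) - ENNReal.ofReal (Real.exp (-(1/2:ℝ)))
            = ENNReal.ofReal (1 - Real.exp (-(1/2:ℝ))) := by
          rw [ENNReal.ofReal_sub _ (Real.exp_nonneg _), ENNReal.ofReal_one]
        rw [h1, ← ENNReal.ofReal_inv_of_pos hexp_pos,
          ← ENNReal.ofReal_mul (by positivity)]
        apply ENNReal.ofReal_le_ofReal
        apply le_of_eq
        ring

private lemma ball_vol {X : Type*} [MetricSpace X] [MeasurableSpace X]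
    (μ : Measure X) {C₀ n₁ n₂ : ℝ} (hC₀ : 0 < C₀) (hn₁ : 0 < n₁) (hn : n₁ ≤ n₂)
    (hV₁ : ∀ (x : X) (r : ℝ), 0 < r → r ≤ 1 →
      μ (Metric.ball x r) ≤ ENNReal.ofReal (C₀ * r ^ n₁))
    (hV₂ : ∀ (x : X) (r : ℝ), 1 ≤ r →
      μ (Metric.ball x r) ≤ ENNReal.ofReal (C₀ * r ^ n₂))
    (x : X) (ρ : ℝ) (hρ : 0 < ρ) :
    μ (Metric.ball x ρ) ≤ ENNReal.ofReal (C₀ * (ρ^n₁ * (1+ρ)^(n₂-n₁))) := by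
  rcases le_total ρ 1 with h | h
  · refine (hV₁ x ρ hρ h).trans (ENNReal.ofReal_le_ofReal ?_)
    have h1 : (1:ℝ) ≤ (1+ρ)^(n₂-n₁) := Real.one_le_rpow (by linarith) (by linarith)
    have h2 : (0:ℝ) ≤ ρ^n₁ := Real.rpow_nonneg hρ.le _
    nlinarith [mul_le_mul_of_nonneg_left (mul_le_mul_of_nonneg_left h1 h2) hC₀.le]
  · refine (hV₂ x ρ h).trans (ENNReal.ofReal_le_ofReal ?_)
    have e : ρ^n₂ = ρ^n₁ * ρ^(n₂-n₁) := by
      rw [← Real.rpow_add hρ]; ring_nf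
    have h2 : ρ^(n₂-n₁) ≤ (1+ρ)^(n₂-n₁) :=
      Real.rpow_le_rpow hρ.le (by linarith) (by linarith)
    have h3 : (0:ℝ) ≤ ρ^n₁ := Real.rpow_nonneg hρ.le _
    rw [e]
    nlinarith [mul_le_mul_of_nonneg_left (mul_le_mul_of_nonneg_left h2 h3) hC₀.le]

private lemma const_ineq {n₁ n₂ t D : ℝ} (hn₁ : 0 < n₁) (hn : n₁ ≤ n₂) (ht : 0 < t)
    (hD : 0 ≤ D) :
    t ^ (-(n₁/2)) * (D * (Real.sqrt (8*t) ^ n₁ * (1 + Real.sqrt (8*t)) ^ (n₂-n₁)))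
      ≤ D * ((8:ℝ)^(n₁/2) * (16:ℝ)^((n₂-n₁)/2)) * (1+t)^((n₂-n₁)/2) := by
  set a := Real.sqrt (8*t) with ha_def
  have h8t : (0:ℝ) < 8*t := by linarith
  have ha : 0 < a := Real.sqrt_pos.mpr h8t
  have ha2 : a^2 = 8*t := Real.sq_sqrt h8t.le
  have h1 : a ^ n₁ = (8:ℝ)^(n₁/2) * t^(n₁/2) := by
    rw [ha_def, Real.sqrt_eq_rpow, ← Real.rpow_mul h8t.le,
      show (1/2) * n₁ = n₁/2 by ring, Real.mul_rpow (by norm_num) ht.le]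
  have h2 : (1+a)^(n₂-n₁) ≤ (16:ℝ)^((n₂-n₁)/2) * (1+t)^((n₂-n₁)/2) := by
    have e1 : (1+a)^(n₂-n₁) = ((1+a)^(2:ℝ))^((n₂-n₁)/2) := by
      rw [← Real.rpow_mul (by linarith)]; ring_nf
    have e2 : (1+a)^(2:ℝ) ≤ 16*(1+t) := by
      rw [show (2:ℝ) = ((2:ℕ):ℝ) by norm_num, Real.rpow_natCast]
      nlinarith [sq_nonneg (a-1)]
    rw [e1, ← Real.mul_rpow (by norm_num) (by linarith)]
    exact Real.rpow_le_rpow (Real.rpow_nonneg (by linarith) _) e2 (by linarith)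
  have h3 : t^(-(n₁/2)) * t^(n₁/2) = 1 := by
    rw [← Real.rpow_add ht]; norm_num
  have hb : 0 ≤ t^(-(n₁/2)) := Real.rpow_nonneg ht.le _
  have hc : 0 ≤ a^n₁ := Real.rpow_nonneg ha.le _
  calc t^(-(n₁/2)) * (D * (a^n₁ * (1+a)^(n₂-n₁)))
      ≤ t^(-(n₁/2)) * (D * (a^n₁ * ((16:ℝ)^((n₂-n₁)/2) * (1+t)^((n₂-n₁)/2)))) := by
        have step := mul_le_mul_of_nonneg_left
          (mul_le_mul_of_nonneg_left (mul_le_mul_of_nonneg_left h2 hc) hD) hb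
        linarith [step]
    _ = (t^(-(n₁/2)) * t^(n₁/2)) * (D * ((8:ℝ)^(n₁/2) * (16:ℝ)^((n₂-n₁)/2))
          * (1+t)^((n₂-n₁)/2)) := by rw [h1]; ring
    _ = _ := by rw [h3]; ring

/-- Bilinear Davies–Gaffney type estimate (Lemma of Section 5.3): under the
non-uniform volume growth and the Gaussian kernel bound, for functions `f, g` in
`L²(μ)` supported in open balls `B₁, B₂` at distance greater than `r`,
`|∬ p(x,y) f(x) g(y) dμ(y) dμ(x)| ≤ C (1+t)^{(n₂-n₁)/2} e^{-r²/(8t)} ‖f‖₂ ‖g‖₂`. -/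
theorem davies_gaffney_bilinear_estimate {X : Type*} [MetricSpace X] [MeasurableSpace X]
    [BorelSpace X] (μ : Measure X) (C₀ n₁ n₂ : ℝ) (hC₀ : 0 < C₀) (hn₁ : 0 < n₁)
    (hn : n₁ ≤ n₂)
    (hV₁ : ∀ (x : X) (r : ℝ), 0 < r → r ≤ 1 →
      μ (Metric.ball x r) ≤ ENNReal.ofReal (C₀ * r ^ n₁))
    (hV₂ : ∀ (x : X) (r : ℝ), 1 ≤ r →
      μ (Metric.ball x r) ≤ ENNReal.ofReal (C₀ * r ^ n₂)) :
    ∃ C > 0, ∀ t > (0 : ℝ), ∀ r > (0 : ℝ), ∀ p : X × X → ℝ,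
      Measurable p →
      (∀ y z : X, |p (y, z)| ≤ t ^ (-(n₁ / 2)) * Real.exp (-(dist y z) ^ 2 / (4 * t))) →
      ∀ (x₁ x₂ : X) (r₁ : ℝ), 0 < r₁ → ∀ r₂ : ℝ, 0 < r₂ →
      (∀ y ∈ Metric.ball x₁ r₁, ∀ z ∈ Metric.ball x₂ r₂, r < dist y z) →
      ∀ f g : X → ℝ, MemLp f 2 μ → MemLp g 2 μ →
      (∀ᵐ x ∂μ, x ∉ Metric.ball x₁ r₁ → f x = 0) →
      (∀ᵐ x ∂μ, x ∉ Metric.ball x₂ r₂ → g x = 0) →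
      |∫ x, (∫ y, p (x, y) * f x * g y ∂μ) ∂μ|
        ≤ C * (1 + t) ^ ((n₂ - n₁) / 2) * Real.exp (-r ^ 2 / (8 * t))
          * (eLpNorm f 2 μ).toReal * (eLpNorm g 2 μ).toReal := by
  have hexp_pos : (0:ℝ) < 1 - Real.exp (-(1/2:ℝ)) := by
    have : Real.exp (-(1/2:ℝ)) < 1 := Real.exp_lt_one_iff.mpr (by norm_num)
    linarith
  set D : ℝ := Real.exp (n₂^2/2) * (1 - Real.exp (-(1/2:ℝ)))⁻¹ * C₀ with hD_def
  have hD : 0 < D := by positivity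
  set C : ℝ := D * ((8:ℝ)^(n₁/2) * (16:ℝ)^((n₂-n₁)/2)) with hC_def
  have hCpos : 0 < C := by positivity
  refine ⟨C, hCpos, ?_⟩
  intro t ht r hr p hp hpb x₁ x₂ r₁ hr₁ r₂ hr₂ hsep f g hf hg hf0 hg0
  -- σ-finiteness of μ
  haveI : SigmaFinite μ := by
    rcases isEmpty_or_nonempty X with hX | hX
    · have h0 : μ = 0 := Measure.eq_zero_of_isEmpty μ
      rw [h0]; infer_instance
    · obtain ⟨x₀⟩ := hX
      refine ⟨⟨⟨fun n => Metric.ball x₀ ((n:ℝ)+1), fun _ => trivial, fun n => ?_, ?_⟩⟩⟩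
      · exact lt_of_le_of_lt (hV₂ x₀ ((n:ℝ)+1) (by linarith [Nat.cast_nonneg (α := ℝ) n]))
          ENNReal.ofReal_lt_top
      · ext y
        simp only [Set.mem_iUnion, Set.mem_univ, iff_true, Metric.mem_ball]
        obtain ⟨n, hn'⟩ := exists_nat_gt (dist y x₀)
        exact ⟨n, by linarith⟩
  have hvol := ball_vol μ hC₀ hn₁ hn hV₁ hV₂
  have hker := fun x : X => kernel_int μ hC₀ hn₁ hn hvol ht x
  set a : ℝ := Real.sqrt (8*t) with ha_def
  set B₁ : Set X := Metric.ball x₁ r₁ with hB₁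
  set B₂ : Set X := Metric.ball x₂ r₂ with hB₂
  have hB₁m : MeasurableSet B₁ := measurableSet_ball
  have hB₂m : MeasurableSet B₂ := measurableSet_ball
  -- measurable representatives
  obtain ⟨f', hf'meas, hff'⟩ : ∃ f', Measurable f' ∧ f =ᵐ[μ] f' := by
    obtain ⟨f', h1, h2⟩ := hf.aestronglyMeasurable.aemeasurable
    exact ⟨f', h1, h2⟩
  obtain ⟨g', hg'meas, hgg'⟩ : ∃ g', Measurable g' ∧ g =ᵐ[μ] g' := by
    obtain ⟨g', h1, h2⟩ := hg.aestronglyMeasurable.aemeasurable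
    exact ⟨g', h1, h2⟩
  set F : X → ℝ≥0∞ := B₁.indicator (fun x => ENNReal.ofReal |f' x|) with hF_def
  set G : X → ℝ≥0∞ := B₂.indicator (fun x => ENNReal.ofReal |g' x|) with hG_def
  have hFmeas : Measurable F := (hf'meas.abs.ennreal_ofReal).indicator hB₁m
  have hGmeas : Measurable G := (hg'meas.abs.ennreal_ofReal).indicator hB₂m
  have hFae : ∀ᵐ x ∂μ, ENNReal.ofReal |f x| = F x := by
    filter_upwards [hff', hf0] with x h1 h2
    by_cases hx : x ∈ B₁
    · simp [hF_def, Set.indicator_of_mem hx, h1]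
    · simp [hF_def, Set.indicator_of_notMem hx, h2 hx]
  have hGae : ∀ᵐ x ∂μ, ENNReal.ofReal |g x| = G x := by
    filter_upwards [hgg', hg0] with x h1 h2
    by_cases hx : x ∈ B₂
    · simp [hG_def, Set.indicator_of_mem hx, h1]
    · simp [hG_def, Set.indicator_of_notMem hx, h2 hx]
  -- the kernel for the Schur test
  set Kp : X × X → ℝ≥0∞ := fun z =>
    B₁.indicator (fun _ => (1:ℝ≥0∞)) z.1 * B₂.indicator (fun _ => (1:ℝ≥0∞)) z.2
      * ENNReal.ofReal |p z| with hKp_def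
  have hKpmeas : Measurable Kp := by
    exact (((measurable_const.indicator hB₁m).comp measurable_fst).mul
      ((measurable_const.indicator hB₂m).comp measurable_snd)).mul
      (hp.abs.ennreal_ofReal)
  set c : ℝ := t ^ (-(n₁/2)) * Real.exp (-r^2/(8*t)) with hc_def
  have hc0 : 0 ≤ c := by positivity
  set Sker : ℝ≥0∞ := ENNReal.ofReal ((Real.exp (n₂^2/2) * (1 - Real.exp (-(1/2:ℝ)))⁻¹)
      * (C₀ * (a ^ n₁ * (1 + a) ^ (n₂-n₁)))) with hSker_def
  set S' : ℝ≥0∞ := ENNReal.ofReal c * Sker with hS'_def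
  have hS'top : S' ≠ ∞ := by
    rw [hS'_def]
    exact ENNReal.mul_ne_top ENNReal.ofReal_ne_top ENNReal.ofReal_ne_top
  -- pointwise kernel bound on the supports
  have hker_pt : ∀ x ∈ B₁, ∀ y ∈ B₂, ENNReal.ofReal |p (x, y)|
      ≤ ENNReal.ofReal c * ENNReal.ofReal (Real.exp (-(dist x y)^2 / (8*t))) := by
    intro x hx y hy
    rw [← ENNReal.ofReal_mul hc0]
    apply ENNReal.ofReal_le_ofReal
    have hd := hsep x hx y hy
    have hb := hpb x y
    have h1 : r^2 ≤ (dist x y)^2 := by nlinarith [dist_nonneg (x := x) (y := y)]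
    have he : Real.exp (-(dist x y)^2/(4*t))
        ≤ Real.exp (-r^2/(8*t)) * Real.exp (-(dist x y)^2/(8*t)) := by
      rw [← Real.exp_add]
      apply Real.exp_le_exp.mpr
      have h2 : (0:ℝ) ≤ ((dist x y)^2 - r^2)/(8*t) :=
        div_nonneg (by linarith) (by linarith)
      have h3 : -r^2/(8*t) + -(dist x y)^2/(8*t) - (-(dist x y)^2/(4*t))
          = ((dist x y)^2 - r^2)/(8*t) := by ring
      linarith
    calc |p (x, y)| ≤ t ^ (-(n₁/2)) * Real.exp (-(dist x y)^2/(4*t)) := hb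
      _ ≤ t ^ (-(n₁/2)) * (Real.exp (-r^2/(8*t)) * Real.exp (-(dist x y)^2/(8*t))) :=
          mul_le_mul_of_nonneg_left he (Real.rpow_nonneg ht.le _)
      _ = c * Real.exp (-(dist x y)^2/(8*t)) := by rw [hc_def]; ring
  -- row bounds
  have hrow : ∀ x, ∫⁻ y, Kp (x, y) ∂μ ≤ S' := by
    intro x
    by_cases hx : x ∈ B₁
    · have hpt : ∀ y, Kp (x, y)
          ≤ ENNReal.ofReal c * ENNReal.ofReal (Real.exp (-(dist x y)^2/(8*t))) := by
        intro y
        by_cases hy : y ∈ B₂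
        · simpa [hKp_def, Set.indicator_of_mem hx, Set.indicator_of_mem hy]
            using hker_pt x hx y hy
        · simp [hKp_def, Set.indicator_of_notMem hy]
      calc ∫⁻ y, Kp (x, y) ∂μ
          ≤ ∫⁻ y, ENNReal.ofReal c * ENNReal.ofReal (Real.exp (-(dist x y)^2/(8*t))) ∂μ :=
            lintegral_mono hpt
        _ = ENNReal.ofReal c * ∫⁻ y, ENNReal.ofReal (Real.exp (-(dist x y)^2/(8*t))) ∂μ :=
            lintegral_const_mul' _ _ ENNReal.ofReal_ne_top
        _ ≤ S' := mul_le_mul_right (hker x) _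
    · have h0 : ∀ y, Kp (x, y) = 0 := by
        intro y; simp [hKp_def, Set.indicator_of_notMem hx]
      simp [h0]
  have hcol : ∀ y, ∫⁻ x, Kp (x, y) ∂μ ≤ S' := by
    intro y
    by_cases hy : y ∈ B₂
    · have hpt : ∀ x, Kp (x, y)
          ≤ ENNReal.ofReal c * ENNReal.ofReal (Real.exp (-(dist y x)^2/(8*t))) := by
        intro x
        by_cases hx : x ∈ B₁
        · rw [dist_comm]
          simpa [hKp_def, Set.indicator_of_mem hx, Set.indicator_of_mem hy]
            using hker_pt x hx y hy
        · simp [hKp_def, Set.indicator_of_notMem hx]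
      calc ∫⁻ x, Kp (x, y) ∂μ
          ≤ ∫⁻ x, ENNReal.ofReal c * ENNReal.ofReal (Real.exp (-(dist y x)^2/(8*t))) ∂μ :=
            lintegral_mono hpt
        _ = ENNReal.ofReal c * ∫⁻ x, ENNReal.ofReal (Real.exp (-(dist y x)^2/(8*t))) ∂μ :=
            lintegral_const_mul' _ _ ENNReal.ofReal_ne_top
        _ ≤ S' := mul_le_mul_right (hker y) _
    · have h0 : ∀ x, Kp (x, y) = 0 := by
        intro x; simp [hKp_def, Set.indicator_of_notMem hy]
      simp [h0]
  -- the main chain in ℝ≥0∞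
  have main : ENNReal.ofReal |∫ x, (∫ y, p (x, y) * f x * g y ∂μ) ∂μ|
      ≤ S' * (∫⁻ x, F x ^ (2:ℝ) ∂μ) ^ (1/2:ℝ) * (∫⁻ y, G y ^ (2:ℝ) ∂μ) ^ (1/2:ℝ) := by
    calc ENNReal.ofReal |∫ x, (∫ y, p (x, y) * f x * g y ∂μ) ∂μ|
        ≤ ∫⁻ x, ENNReal.ofReal |∫ y, p (x, y) * f x * g y ∂μ| ∂μ :=
          aux_ofReal_abs_integral μ _
      _ ≤ ∫⁻ x, ∫⁻ y, ENNReal.ofReal |p (x, y) * f x * g y| ∂μ ∂μ :=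
          lintegral_mono fun x => aux_ofReal_abs_integral μ _
      _ = ∫⁻ x, ∫⁻ y, ENNReal.ofReal |p (x, y)| * ENNReal.ofReal |f x|
            * ENNReal.ofReal |g y| ∂μ ∂μ := by
          refine lintegral_congr fun x => lintegral_congr fun y => ?_
          rw [abs_mul, abs_mul, ENNReal.ofReal_mul (mul_nonneg (abs_nonneg _) (abs_nonneg _)),
            ENNReal.ofReal_mul (abs_nonneg _)]
      _ = ∫⁻ x, ∫⁻ y, ENNReal.ofReal |p (x, y)| * F x * G y ∂μ ∂μ := by
          apply lintegral_congr_ae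
          filter_upwards [hFae] with x hx
          apply lintegral_congr_ae
          filter_upwards [hGae] with y hy
          rw [hx, hy]
      _ ≤ ∫⁻ x, ∫⁻ y, Kp (x, y) * F x * G y ∂μ ∂μ := by
          refine lintegral_mono fun x => lintegral_mono fun y => ?_
          by_cases hx : x ∈ B₁
          · by_cases hy : y ∈ B₂
            · simp [hKp_def, Set.indicator_of_mem hx, Set.indicator_of_mem hy]
            · simp [hG_def, Set.indicator_of_notMem hy]
          · simp [hF_def, Set.indicator_of_notMem hx]
      _ ≤ S' * (∫⁻ x, F x ^ (2:ℝ) ∂μ) ^ (1/2:ℝ) * (∫⁻ y, G y ^ (2:ℝ) ∂μ) ^ (1/2:ℝ) :=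
          schur_test μ hKpmeas hFmeas hGmeas hS'top hrow hcol
  -- L² norms
  have hF2 : (∫⁻ x, F x ^ (2:ℝ) ∂μ) ^ (1/2:ℝ) ≤ eLpNorm f 2 μ := by
    have hle : ∫⁻ x, F x ^ (2:ℝ) ∂μ ≤ ∫⁻ x, (‖f x‖₊ : ℝ≥0∞) ^ (2:ℝ) ∂μ := by
      apply lintegral_mono_ae
      filter_upwards [hff'] with x hx
      have h1 : F x ≤ ENNReal.ofReal |f' x| := Set.indicator_le_self _ _ x
      calc F x ^ (2:ℝ) ≤ ENNReal.ofReal |f' x| ^ (2:ℝ) :=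
            ENNReal.rpow_le_rpow h1 (by norm_num)
        _ = (‖f x‖₊ : ℝ≥0∞) ^ (2:ℝ) := by
            rw [← enorm_eq_nnnorm, ← ofReal_norm_eq_enorm, Real.norm_eq_abs, hx]
    have hsn : eLpNorm f 2 μ = (∫⁻ x, (‖f x‖₊ : ℝ≥0∞) ^ (2:ℝ) ∂μ) ^ (1/2:ℝ) := by
      rw [eLpNorm_eq_lintegral_rpow_enorm_toReal (by norm_num) (by norm_num)]
      norm_num
      rfl
    rw [hsn]
    exact ENNReal.rpow_le_rpow hle (by norm_num)
  have hG2 : (∫⁻ y, G y ^ (2:ℝ) ∂μ) ^ (1/2:ℝ) ≤ eLpNorm g 2 μ := by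
    have hle : ∫⁻ x, G x ^ (2:ℝ) ∂μ ≤ ∫⁻ x, (‖g x‖₊ : ℝ≥0∞) ^ (2:ℝ) ∂μ := by
      apply lintegral_mono_ae
      filter_upwards [hgg'] with x hx
      have h1 : G x ≤ ENNReal.ofReal |g' x| := Set.indicator_le_self _ _ x
      calc G x ^ (2:ℝ) ≤ ENNReal.ofReal |g' x| ^ (2:ℝ) :=
            ENNReal.rpow_le_rpow h1 (by norm_num)
        _ = (‖g x‖₊ : ℝ≥0∞) ^ (2:ℝ) := by
            rw [← enorm_eq_nnnorm, ← ofReal_norm_eq_enorm, Real.norm_eq_abs, hx]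
    have hsn : eLpNorm g 2 μ = (∫⁻ x, (‖g x‖₊ : ℝ≥0∞) ^ (2:ℝ) ∂μ) ^ (1/2:ℝ) := by
      rw [eLpNorm_eq_lintegral_rpow_enorm_toReal (by norm_num) (by norm_num)]
      norm_num
      rfl
    rw [hsn]
    exact ENNReal.rpow_le_rpow hle (by norm_num)
  -- bound on S'
  have hS'le : S' ≤ ENNReal.ofReal (C * (1+t) ^ ((n₂-n₁)/2) * Real.exp (-r^2/(8*t))) := by
    rw [hS'_def, hSker_def, ← ENNReal.ofReal_mul hc0]
    apply ENNReal.ofReal_le_ofReal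
    have hkey := const_ineq hn₁ hn ht hD.le (n₂ := n₂)
    calc c * ((Real.exp (n₂^2/2) * (1 - Real.exp (-(1/2:ℝ)))⁻¹)
          * (C₀ * (a ^ n₁ * (1 + a) ^ (n₂-n₁))))
        = (t ^ (-(n₁/2)) * (D * (a ^ n₁ * (1 + a) ^ (n₂-n₁)))) * Real.exp (-r^2/(8*t)) := by
          rw [hc_def, hD_def]; ring
      _ ≤ (D * ((8:ℝ)^(n₁/2) * (16:ℝ)^((n₂-n₁)/2)) * (1+t)^((n₂-n₁)/2))
            * Real.exp (-r^2/(8*t)) := by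
          apply mul_le_mul_of_nonneg_right _ (Real.exp_nonneg _)
          rw [ha_def]
          exact hkey
      _ = C * (1+t) ^ ((n₂-n₁)/2) * Real.exp (-r^2/(8*t)) := by rw [hC_def]
  -- assemble
  have hfin : ENNReal.ofReal |∫ x, (∫ y, p (x, y) * f x * g y ∂μ) ∂μ|
      ≤ ENNReal.ofReal (C * (1+t) ^ ((n₂-n₁)/2) * Real.exp (-r^2/(8*t))
          * (eLpNorm f 2 μ).toReal * (eLpNorm g 2 μ).toReal) := by
    calc ENNReal.ofReal |∫ x, (∫ y, p (x, y) * f x * g y ∂μ) ∂μ|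
        ≤ S' * (∫⁻ x, F x ^ (2:ℝ) ∂μ) ^ (1/2:ℝ) * (∫⁻ y, G y ^ (2:ℝ) ∂μ) ^ (1/2:ℝ) := main
      _ ≤ ENNReal.ofReal (C * (1+t) ^ ((n₂-n₁)/2) * Real.exp (-r^2/(8*t)))
            * eLpNorm f 2 μ * eLpNorm g 2 μ :=
          mul_le_mul (mul_le_mul hS'le hF2 zero_le zero_le) hG2 zero_le zero_le
      _ = ENNReal.ofReal (C * (1+t) ^ ((n₂-n₁)/2) * Real.exp (-r^2/(8*t))
            * (eLpNorm f 2 μ).toReal * (eLpNorm g 2 μ).toReal) := by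
          rw [← ENNReal.ofReal_toReal hf.eLpNorm_ne_top,
            ← ENNReal.ofReal_toReal hg.eLpNorm_ne_top,
            ← ENNReal.ofReal_mul (by positivity), ← ENNReal.ofReal_mul (by positivity)]
          rw [ENNReal.ofReal_toReal hf.eLpNorm_ne_top, ENNReal.ofReal_toReal hg.eLpNorm_ne_top]
  have hrhs : 0 ≤ C * (1+t) ^ ((n₂-n₁)/2) * Real.exp (-r^2/(8*t))
      * (eLpNorm f 2 μ).toReal * (eLpNorm g 2 μ).toReal := by positivity
  exact (ENNReal.ofReal_le_ofReal_iff hrhs).mp hfin
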